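/- Let T : D(T) → H be a closed operator with dense domain on a quaternionic Hilbert space H. Then D(T*T) is a core for T; that is, the closure of the restriction of T to D(T*T) equals T. -/

import Mathlib

noncomputable section

notation "ℍ" => Quaternion ℝ

open MeasureTheory Filter

/-- Borel σ-algebra on the quaternions. -/
instance : MeasurableSpace ℍ := borel ℍ

instance : BorelSpace ℍ := ⟨rfl⟩

/-- A quaternionic (right) Hilbert space structure on a normed additive group `H`:
a right scalar multiplication by quaternions together with an ℍ-valued Hermitian
scalar product compatible with the norm.  (Completeness of `H` is assumed
separately via `[CompleteSpace H]`.) -/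
structure QHS (H : Type) [NormedAddCommGroup H] where
  smul : H → ℍ → H
  inn : H → H → ℍ
  add_smul' : ∀ (u v : H) (q : ℍ), smul (u + v) q = smul u q + smul v q
  smul_add' : ∀ (u : H) (p q : ℍ), smul u (p + q) = smul u p + smul u q
  smul_mul' : ∀ (u : H) (p q : ℍ), smul u (p * q) = smul (smul u p) q
  smul_one' : ∀ u : H, smul u 1 = u
  inn_add_right : ∀ u v w : H, inn u (v + w) = inn u v + inn u w
  inn_smul_right : ∀ (u v : H) (q : ℍ), inn u (smul v q) = inn u v * q
  inn_conj : ∀ u v : H, inn u v = star (inn v u)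
  inn_self_real : ∀ u : H, inn u u = (((inn u u).re : ℝ) : ℍ)
  norm_sq' : ∀ u : H, ‖u‖ ^ 2 = (inn u u).re

variable {H : Type} [NormedAddCommGroup H]

/-- The graph of an operator `T` with domain `D`. -/
def graphOf (T : H → H) (D : Set H) : Set (H × H) := {p | p.1 ∈ D ∧ p.2 = T p.1}

/-- Domain of a graph. -/
def graphDom (G : Set (H × H)) : Set H := {u | ∃ w, (u, w) ∈ G}

/-- A function extracted from a graph (by choice). -/
def graphFun (G : Set (H × H)) : H → H := fun u =>
  letI : Nonempty H := ⟨0⟩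
  Classical.epsilon fun w => (u, w) ∈ G

/-- Boundedness of an everywhere defined operator. -/
def BoundedOp (T : H → H) : Prop := ∃ C : ℝ, ∀ u : H, ‖T u‖ ≤ C * ‖u‖

/-- The operator norm. -/
def opNorm (T : H → H) : ℝ := sInf {C : ℝ | 0 ≤ C ∧ ∀ u : H, ‖T u‖ ≤ C * ‖u‖}

/-- Closed operator: the graph is closed. -/
def ClosedOp (T : H → H) (D : Set H) : Prop := IsClosed (graphOf T D)

/-- The domain `D(T²)`. -/
def D2 (T : H → H) (D : Set H) : Set H := {u ∈ D | T u ∈ D}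

/-- The slice complex plane `ℂ_ι = {a + ι b}` determined by an imaginary unit `ι`. -/
def Cslice (ι : ℍ) : Set ℍ :=
  {x : ℍ | ∃ a b : ℝ, x = ((a : ℝ) : ℍ) + ι * ((b : ℝ) : ℍ)}

/-- The closed upper half slice plane `ℂ_ι⁺ = {a + ι b : b ≥ 0}`. -/
def Cplus (ι : ℍ) : Set ℍ :=
  {x : ℍ | ∃ a b : ℝ, 0 ≤ b ∧ x = ((a : ℝ) : ℍ) + ι * ((b : ℝ) : ℍ)}

namespace QHS

variable (𝒮 : QHS H)

/-- Right ℍ-linearity of an everywhere defined map. -/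
def RightLinear (T : H → H) : Prop :=
  (∀ u v : H, T (u + v) = T u + T v) ∧ ∀ (u : H) (q : ℍ), T (𝒮.smul u q) = 𝒮.smul (T u) q

/-- A (right ℍ-linear) subspace. -/
def IsSubspace (D : Set H) : Prop :=
  (0 : H) ∈ D ∧ (∀ u ∈ D, ∀ v ∈ D, u + v ∈ D) ∧ ∀ u ∈ D, ∀ q : ℍ, 𝒮.smul u q ∈ D

/-- Right ℍ-linearity on a domain `D`. -/
def RightLinearOn (T : H → H) (D : Set H) : Prop :=
  (∀ u ∈ D, ∀ v ∈ D, T (u + v) = T u + T v) ∧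
    ∀ u ∈ D, ∀ q : ℍ, T (𝒮.smul u q) = 𝒮.smul (T u) q

/-- `S` is the adjoint of `T` (both everywhere defined):  `⟨S u|v⟩ = ⟨u|T v⟩`. -/
def AdjointPair (T S : H → H) : Prop := ∀ u v : H, 𝒮.inn (S u) v = 𝒮.inn u (T v)

def SelfAdjointOp (T : H → H) : Prop := ∀ u v : H, 𝒮.inn (T u) v = 𝒮.inn u (T v)

def AntiSelfAdjointOp (T : H → H) : Prop := ∀ u v : H, 𝒮.inn (T u) v = -𝒮.inn u (T v)

/-- Positivity: `⟨u|T u⟩` is real and non-negative. -/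
def PositiveOp (T : H → H) : Prop :=
  ∀ u : H, 𝒮.inn u (T u) = ((((𝒮.inn u (T u)).re : ℝ)) : ℍ) ∧ 0 ≤ (𝒮.inn u (T u)).re

/-- Positivity on a domain. -/
def PositiveOn (T : H → H) (D : Set H) : Prop :=
  ∀ u ∈ D, 𝒮.inn u (T u) = ((((𝒮.inn u (T u)).re : ℝ)) : ℍ) ∧ 0 ≤ (𝒮.inn u (T u)).re

/-- Unitarity: right linear, surjective, inner-product preserving. -/
def UnitaryOp (T : H → H) : Prop :=
  𝒮.RightLinear T ∧ Function.Surjective T ∧ ∀ u v : H, 𝒮.inn (T u) (T v) = 𝒮.inn u v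

/-- The domain of the adjoint of `T : D → H`. -/
def adjDom (T : H → H) (D : Set H) : Set H :=
  {u : H | ∃ w : H, ∀ v ∈ D, 𝒮.inn w v = 𝒮.inn u (T v)}

/-- The adjoint operator of `T : D → H` (defined by choice; it is the genuine
adjoint when `D` is dense). -/
def adjOp (T : H → H) (D : Set H) : H → H := fun u =>
  letI := Classical.propDecidable
  if h : ∃ w : H, ∀ v ∈ D, 𝒮.inn w v = 𝒮.inn u (T v) then h.choose else 0

/-- Self-adjointness of an unbounded operator: `T* = T` (same domain, same values). -/
def SelfAdjointUnb (T : H → H) (D : Set H) : Prop :=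
  𝒮.adjDom T D = D ∧ ∀ u ∈ D, 𝒮.adjOp T D u = T u

/-- Normality of an unbounded operator: `T T* = T* T`. -/
def NormalUnb (T : H → H) (D : Set H) : Prop :=
  ({u ∈ D | T u ∈ 𝒮.adjDom T D} = {u ∈ 𝒮.adjDom T D | 𝒮.adjOp T D u ∈ D}) ∧
    ∀ u ∈ D, T u ∈ 𝒮.adjDom T D → 𝒮.adjOp T D (T u) = T (𝒮.adjOp T D u)

/-- The positive square root of a positive bounded operator (by choice). -/
def posSqrt (T : H → H) : H → H :=
  letI : Nonempty (H → H) := ⟨id⟩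
  Classical.epsilon fun R : H → H =>
    𝒮.RightLinear R ∧ BoundedOp R ∧ 𝒮.PositiveOp R ∧ 𝒮.SelfAdjointOp R ∧
      ∀ u : H, R (R u) = T u

/-- The operator `Δ_q(T) = T² - T (2 Re q) + |q|² 1`. -/
def Delta (T : H → H) (q : ℍ) : H → H := fun u =>
  T (T u) - 𝒮.smul (T u) (((2 * q.re : ℝ)) : ℍ) + 𝒮.smul u (((‖q‖ ^ 2 : ℝ)) : ℍ)

/-- Membership in the spherical resolvent set: `Δ_q(T)` is injective with dense range
and bounded inverse. -/
def InSphResolvent (T : H → H) (D : Set H) (q : ℍ) : Prop :=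
  (∀ u ∈ D2 T D, 𝒮.Delta T q u = 0 → u = 0) ∧
    Dense (𝒮.Delta T q '' D2 T D) ∧
    ∃ C : ℝ, ∀ u ∈ D2 T D, ‖u‖ ≤ C * ‖𝒮.Delta T q u‖

/-- The spherical spectrum. -/
def sphSpectrum (T : H → H) (D : Set H) : Set ℍ := {q | ¬𝒮.InSphResolvent T D q}

/-- The spherical point spectrum. -/
def sphPointSpectrum (T : H → H) (D : Set H) : Set ℍ :=
  {q | ∃ u ∈ D2 T D, u ≠ 0 ∧ 𝒮.Delta T q u = 0}

/-- The spherical residual spectrum. -/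
def sphResidualSpectrum (T : H → H) (D : Set H) : Set ℍ :=
  {q | (∀ u ∈ D2 T D, 𝒮.Delta T q u = 0 → u = 0) ∧
    ¬Dense (𝒮.Delta T q '' D2 T D)}

/-- The spherical continuous spectrum. -/
def sphContinuousSpectrum (T : H → H) (D : Set H) : Set ℍ :=
  {q | (∀ u ∈ D2 T D, 𝒮.Delta T q u = 0 → u = 0) ∧
    Dense (𝒮.Delta T q '' D2 T D) ∧
    ¬∃ C : ℝ, ∀ u ∈ D2 T D, ‖u‖ ≤ C * ‖𝒮.Delta T q u‖}

/-- A Hilbert basis of a quaternionic Hilbert space. -/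
def IsHilbertBasis (N : Set H) : Prop :=
  (∀ z ∈ N, ‖z‖ = 1) ∧ (∀ z ∈ N, ∀ w ∈ N, z ≠ w → 𝒮.inn z w = 0) ∧
    ∀ u : H, (∀ z ∈ N, 𝒮.inn z u = 0) → u = 0

/-- `L` is the left scalar multiplication induced by the Hilbert basis `N`:
`L_q u = Σ_{z ∈ N} z q ⟨z|u⟩`. -/
def IsInducedLSM (N : Set H) (L : ℍ → H → H) : Prop :=
  ∀ (q : ℍ) (u : H),
    HasSum (fun z : N => 𝒮.smul (z : H) (q * 𝒮.inn (z : H) u)) (L q u)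

/-- `L` is a left scalar multiplication of `H` (induced by some Hilbert basis). -/
def IsLSM (L : ℍ → H → H) : Prop :=
  ∃ N : Set H, 𝒮.IsHilbertBasis N ∧ 𝒮.IsInducedLSM N L

/-- The orthogonal complement of a subset. -/
def orthC (S : Set H) : Set H := {u : H | ∀ v ∈ S, 𝒮.inn u v = 0}

/-- The complex subspace `H₊^{Jι} = {u : J u = u ι}`. -/
def Hplus (J : H → H) (ι : ℍ) : Set H := {u : H | J u = 𝒮.smul u ι}

/-- The complex subspace `H₋^{Jι} = {u : J u = -u ι}`. -/
def Hminus (J : H → H) (ι : ℍ) : Set H := {u : H | J u = -𝒮.smul u ι}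

end QHS

/-- A quaternionic projection valued measure (qPVM) over `ℂ_ι⁺` in `H`. -/
structure IsQPVM (𝒮 : QHS H) (ι : ℍ) (P : Set ℍ → H → H) : Prop where
  proj_linear : ∀ E : Set ℍ, MeasurableSet E → E ⊆ Cplus ι → 𝒮.RightLinear (P E)
  proj_bounded : ∀ E : Set ℍ, MeasurableSet E → E ⊆ Cplus ι → BoundedOp (P E)
  proj_idem : ∀ E : Set ℍ, MeasurableSet E → E ⊆ Cplus ι → ∀ u, P E (P E u) = P E u
  proj_sa : ∀ E : Set ℍ, MeasurableSet E → E ⊆ Cplus ι → 𝒮.SelfAdjointOp (P E)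
  proj_pos : ∀ E : Set ℍ, MeasurableSet E → E ⊆ Cplus ι → 𝒮.PositiveOp (P E)
  total : ∀ u : H, P (Cplus ι) u = u
  inter : ∀ E F : Set ℍ, MeasurableSet E → E ⊆ Cplus ι → MeasurableSet F → F ⊆ Cplus ι →
    ∀ u, P (E ∩ F) u = P E (P F u)
  sigma_add : ∀ E : ℕ → Set ℍ, (∀ n, MeasurableSet (E n) ∧ E n ⊆ Cplus ι) →
    (Pairwise fun n m => Disjoint (E n) (E m)) →
    ∀ u : H, HasSum (fun n => P (E n) u) (P (⋃ n, E n) u)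

/-- The support of a qPVM: points of `ℂ_ι⁺` all of whose relatively open neighbourhoods
have non-zero projection. -/
def suppP (ι : ℍ) (P : Set ℍ → H → H) : Set ℍ :=
  {x ∈ Cplus ι | ∀ U : Set ℍ, IsOpen U → x ∈ U → ∃ u : H, P (U ∩ Cplus ι) u ≠ 0}

/-- An intertwining quaternionic PVM (iqPVM): a qPVM together with a commuting left
scalar multiplication. -/
def IsIQPVM (𝒮 : QHS H) (ι : ℍ) (P : Set ℍ → H → H) (L : ℍ → H → H) : Prop :=
  IsQPVM 𝒮 ι P ∧ 𝒮.IsLSM L ∧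
    ∀ E : Set ℍ, MeasurableSet E → E ⊆ Cplus ι →
      ∀ (q : ℍ) (u : H), P E (L q u) = L q (P E u)

/-- Data of a simple function: coefficients and pairwise disjoint Borel subsets of `ℂ_ι⁺`. -/
def IsSimpleData (ι : ℍ) {n : ℕ} (c : Fin n → ℍ) (E : Fin n → Set ℍ) : Prop :=
  (∀ ℓ, MeasurableSet (E ℓ) ∧ E ℓ ⊆ Cplus ι) ∧
    Pairwise fun ℓ ℓ' => Disjoint (E ℓ) (E ℓ')

/-- `S = ∫ φ d𝒫`, characterized by uniform approximation (on the support of `P`)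
by simple functions together with approximation of `S` by the corresponding
elementary integrals `Σ_ℓ L_{c_ℓ} P(E_ℓ)`. -/
def IsBoundedIntegral (𝒮 : QHS H) (ι : ℍ) (P : Set ℍ → H → H) (L : ℍ → H → H)
    (φ : ℍ → ℍ) (S : H → H) : Prop :=
  ∀ ε : ℝ, 0 < ε → ∃ (n : ℕ) (c : Fin n → ℍ) (E : Fin n → Set ℍ),
    IsSimpleData ι c E ∧
    (∀ x ∈ suppP ι P, ‖φ x - ∑ ℓ, Set.indicator (E ℓ) (fun _ => c ℓ) x‖ ≤ ε) ∧
    ∀ u : H, ‖S u - ∑ ℓ, L (c ℓ) (P (E ℓ) u)‖ ≤ ε * ‖u‖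

/-- The integral of a bounded measurable function with respect to an iqPVM
(defined by choice from the characterizing property). -/
def bInt (𝒮 : QHS H) (ι : ℍ) (P : Set ℍ → H → H) (L : ℍ → H → H) (φ : ℍ → ℍ) : H → H :=
  letI : Nonempty (H → H) := ⟨id⟩
  Classical.epsilon fun S : H → H => IsBoundedIntegral 𝒮 ι P L φ S

/-- The `P`-essential supremum norm `‖φ‖_∞^{(P)}`. -/
def essSupNorm (ι : ℍ) (P : Set ℍ → H → H) (φ : ℍ → ℍ) : ℝ :=
  sInf {k : ℝ | 0 ≤ k ∧ ∀ u : H, P {x ∈ Cplus ι | k < ‖φ x‖} u = 0}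

/-- `μ` is the positive Borel measure `μ_u^{(P)} : E ↦ ⟨u|P(E)u⟩`. -/
def muMatches (𝒮 : QHS H) (ι : ℍ) (P : Set ℍ → H → H) (u : H) (μ : Measure ℍ) : Prop :=
  ∀ E : Set ℍ, MeasurableSet E →
    μ E = ENNReal.ofReal ((𝒮.inn u (P (E ∩ Cplus ι) u)).re)

/-- The natural domain `D_f = {u : f ∈ L²(μ_u^{(P)})}` of `∫ f d𝒫`. -/
def Dnat (𝒮 : QHS H) (ι : ℍ) (P : Set ℍ → H → H) (f : ℍ → ℍ) : Set H :=
  {u : H | ∃ μ : Measure ℍ, muMatches 𝒮 ι P u μ ∧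
    (∫⁻ x, ENNReal.ofReal (‖f x‖ ^ 2) ∂μ) < ⊤}

/-- The truncation of `f` at level `n`. -/
def trunc (f : ℍ → ℍ) (n : ℕ) : ℍ → ℍ := fun x => if ‖f x‖ ≤ (n : ℝ) then f x else 0

/-- The integral of a possibly unbounded measurable function with respect to an iqPVM:
the strong limit of the integrals of its truncations. -/
def uInt (𝒮 : QHS H) (ι : ℍ) (P : Set ℍ → H → H) (L : ℍ → H → H) (f : ℍ → ℍ) : H → H :=
  fun u =>
    letI : Nonempty H := ⟨0⟩
    limUnder atTop fun n : ℕ => bInt 𝒮 ι P L (trunc f n) u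

/-- The inverse `(1 + T*T)⁻¹` of `1 + T*T` (by choice). -/
def CT (𝒮 : QHS H) (T : H → H) (D : Set H) : H → H :=
  letI : Nonempty (H → H) := ⟨id⟩
  Classical.epsilon fun C : H → H =>
    (∀ y : H, C y ∈ D ∧ T (C y) ∈ 𝒮.adjDom T D ∧ C y + 𝒮.adjOp T D (T (C y)) = y) ∧
      ∀ u ∈ D, T u ∈ 𝒮.adjDom T D → C (u + 𝒮.adjOp T D (T u)) = u

/-- The bounded transform `Z_T = T (1 + T*T)^{-1/2}`. -/
def ZT (𝒮 : QHS H) (T : H → H) (D : Set H) : H → H := fun u =>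
  T (𝒮.posSqrt (CT 𝒮 T D) u)

end


/-! ### Auxiliary material for Statement 8 -/

noncomputable section CoreAux

variable {H : Type} [NormedAddCommGroup H]

namespace QHS

variable (𝒮 : QHS H)

lemma inn_add_left' (u v w : H) : 𝒮.inn (u + v) w = 𝒮.inn u w + 𝒮.inn v w := by
  rw [𝒮.inn_conj (u + v) w, 𝒮.inn_add_right, star_add, ← 𝒮.inn_conj, ← 𝒮.inn_conj]

lemma inn_smul_left' (u v : H) (q : ℍ) :
    𝒮.inn (𝒮.smul u q) v = star q * 𝒮.inn u v := by
  rw [𝒮.inn_conj, 𝒮.inn_smul_right, star_mul, ← 𝒮.inn_conj]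

lemma smul_zero_left (q : ℍ) : 𝒮.smul 0 q = 0 := by
  have h := 𝒮.add_smul' 0 0 q
  rw [add_zero] at h
  exact (right_eq_add.mp h)

lemma smul_zero_right (u : H) : 𝒮.smul u 0 = 0 := by
  have h := 𝒮.smul_add' u 0 0
  rw [add_zero] at h
  exact (right_eq_add.mp h)

lemma inn_zero_left (v : H) : 𝒮.inn 0 v = 0 := by
  have h := 𝒮.inn_add_left' 0 0 v
  rw [add_zero] at h
  exact (right_eq_add.mp h)

lemma inn_zero_right (v : H) : 𝒮.inn v 0 = 0 := by
  have h := 𝒮.inn_add_right v 0 0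
  rw [add_zero] at h
  exact (right_eq_add.mp h)

lemma inn_neg_left (u v : H) : 𝒮.inn (-u) v = -𝒮.inn u v := by
  have h := 𝒮.inn_add_left' (-u) u v
  rw [neg_add_cancel, 𝒮.inn_zero_left] at h
  exact eq_neg_of_add_eq_zero_left h.symm

lemma re_inn_symm (u v : H) : (𝒮.inn u v).re = (𝒮.inn v u).re := by
  rw [𝒮.inn_conj u v]; exact Quaternion.re_star _

lemma norm_smul_eq (u : H) (q : ℍ) : ‖𝒮.smul u q‖ = ‖q‖ * ‖u‖ := by
  have e1 : 𝒮.inn (𝒮.smul u q) (𝒮.smul u q) = star q * 𝒮.inn u u * q := by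
    rw [𝒮.inn_smul_right, 𝒮.inn_smul_left']
  have hc : 𝒮.inn u u = (((𝒮.inn u u).re : ℝ) : ℍ) := 𝒮.inn_self_real u
  set c : ℝ := (𝒮.inn u u).re with hcdef
  have e2 : star q * 𝒮.inn u u * q = ((Quaternion.normSq q * c : ℝ) : ℍ) := by
    rw [hc, ← Quaternion.coe_commutes, mul_assoc, Quaternion.star_mul_self,
      ← Quaternion.coe_mul, mul_comm]
  have h1 : ‖𝒮.smul u q‖ ^ 2 = (‖q‖ * ‖u‖) ^ 2 := by
    rw [𝒮.norm_sq', e1, e2, Quaternion.re_coe, Quaternion.normSq_eq_norm_mul_self]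
    have hu : c = ‖u‖ ^ 2 := (𝒮.norm_sq' u).symm
    rw [hu]; ring
  have h2 := congrArg Real.sqrt h1
  rwa [Real.sqrt_sq (norm_nonneg _), Real.sqrt_sq (by positivity)] at h2

end QHS

lemma quat_zero_of_re_mul {x : ℍ} (h : ∀ q : ℍ, (x * q).re = 0) : x = 0 := by
  have h1 := h (star x)
  rw [Quaternion.self_mul_star, Quaternion.re_coe] at h1
  exact Quaternion.normSq_eq_zero.mp h1

/-- Type synonym giving `H` the structure of a real Hilbert space induced by `𝒮`. -/
def Hr {H : Type} [NormedAddCommGroup H] (_𝒮 : QHS H) : Type := H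

namespace Hr

variable (𝒮 : QHS H)

instance : NormedAddCommGroup (Hr 𝒮) := inferInstanceAs (NormedAddCommGroup H)

instance [CompleteSpace H] : CompleteSpace (Hr 𝒮) := inferInstanceAs (CompleteSpace H)

instance : SMul ℝ (Hr 𝒮) := ⟨fun r u => 𝒮.smul u ((r : ℝ) : ℍ)⟩

lemma smul_def (r : ℝ) (u : Hr 𝒮) : r • u = 𝒮.smul u ((r : ℝ) : ℍ) := rfl

instance : Module ℝ (Hr 𝒮) where
  smul := (· • ·)
  one_smul u := by
    rw [smul_def]
    norm_num
    exact 𝒮.smul_one' u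
  mul_smul r s u := by
    rw [smul_def, smul_def, smul_def]
    exact (congrArg (𝒮.smul u) (by rw [mul_comm r s, Quaternion.coe_mul])).trans (𝒮.smul_mul' u _ _)
  smul_zero r := by rw [smul_def]; exact 𝒮.smul_zero_left _
  smul_add r u v := by rw [smul_def, smul_def, smul_def]; exact 𝒮.add_smul' u v _
  add_smul r s u := by
    rw [smul_def, smul_def, smul_def, Quaternion.coe_add]
    exact 𝒮.smul_add' u _ _
  zero_smul u := by
    rw [smul_def, Quaternion.coe_zero]
    exact 𝒮.smul_zero_right u

instance : NormedSpace ℝ (Hr 𝒮) where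
  norm_smul_le r u := by
    rw [smul_def]
    exact le_of_eq ((𝒮.norm_smul_eq u _).trans (by rw [Quaternion.norm_coe]; rfl))

instance : Inner ℝ (Hr 𝒮) := ⟨fun u v => (𝒮.inn u v).re⟩

lemma inner_def (u v : Hr 𝒮) : (inner ℝ u v : ℝ) = (𝒮.inn u v).re := rfl

instance : InnerProductSpace ℝ (Hr 𝒮) where
  norm_sq_eq_re_inner u := 𝒮.norm_sq' u
  conj_inner_symm u v := by
    simp only [starRingEnd_apply, star_trivial]
    erw [inner_def, inner_def, 𝒮.re_inn_symm]
  add_left u v w := by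
    rw [inner_def, inner_def, inner_def]
    show (𝒮.inn (u + v) w).re = _
    erw [𝒮.inn_add_left', Quaternion.re_add]
  smul_left u v r := by
    simp only [starRingEnd_apply, star_trivial]
    rw [inner_def, inner_def]
    show (𝒮.inn (𝒮.smul u ((r : ℝ) : ℍ)) v).re = _
    erw [𝒮.inn_smul_left', Quaternion.star_coe, Quaternion.coe_mul_eq_smul,
      Quaternion.re_smul, smul_eq_mul]

end Hr

end CoreAux

/-- For a closed densely defined operator `T` on a quaternionic Hilbert
space, `D(T*T)` is a core for `T`: the closure of the graph of `T` restricted to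
`D(T*T) = {u ∈ D : T u ∈ D(T*)}` equals the graph of `T`. -/
theorem domain_of_TstarT_is_core
    {H : Type} [NormedAddCommGroup H] [CompleteSpace H] (𝒮 : QHS H)
    (T : H → H) (D : Set H)
    (hD : 𝒮.IsSubspace D) (hdense : Dense D) (hlin : 𝒮.RightLinearOn T D)
    (hclosed : ClosedOp T D) :
    closure (graphOf T {u ∈ D | T u ∈ 𝒮.adjDom T D}) = graphOf T D := by
  classical
  obtain ⟨h0D, hDadd, hDsmul⟩ := hD
  have hT0 : T 0 = 0 := by
    have h := hlin.1 0 h0D 0 h0D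
    rw [add_zero] at h
    exact (right_eq_add.mp h)
  set D0 : Set H := {u ∈ D | T u ∈ 𝒮.adjDom T D} with hD0def
  -- The ambient real Hilbert space K
  haveI : CompleteSpace (WithLp 2 (Hr 𝒮 × Hr 𝒮)) :=
    inferInstance
  -- the graph of T over D as a closed real submodule of K
  let G : Submodule ℝ (WithLp 2 (Hr 𝒮 × Hr 𝒮)) :=
    { carrier := {x | ((WithLp.ofLp x : Hr 𝒮 × Hr 𝒮) : H × H) ∈ graphOf T D}
      add_mem' := by
        rintro x y ⟨hx1, hx2⟩ ⟨hy1, hy2⟩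
        refine ⟨hDadd _ hx1 _ hy1, ?_⟩
        show x.ofLp.2 + y.ofLp.2 = T (x.ofLp.1 + y.ofLp.1)
        erw [hlin.1 _ hx1 _ hy1, hx2, hy2]; rfl
      zero_mem' := ⟨h0D, hT0.symm⟩
      smul_mem' := by
        rintro r x ⟨hx1, hx2⟩
        refine ⟨hDsmul _ hx1 _, ?_⟩
        show 𝒮.smul x.ofLp.2 _ = T (𝒮.smul x.ofLp.1 _)
        rw [hlin.2 _ hx1, hx2] }
  have hGclosed : IsClosed (G : Set (WithLp 2 (Hr 𝒮 × Hr 𝒮))) := hclosed.preimage (WithLp.prod_continuous_ofLp 2 _ _)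
  haveI : CompleteSpace G := hGclosed.completeSpace_coe
  -- adjDom is closed under the operations we need
  have hadjadd : ∀ x ∈ 𝒮.adjDom T D, ∀ y ∈ 𝒮.adjDom T D, x + y ∈ 𝒮.adjDom T D := by
    rintro x ⟨w1, hw1⟩ y ⟨w2, hw2⟩
    refine ⟨w1 + w2, fun v hv => ?_⟩
    rw [𝒮.inn_add_left', hw1 v hv, hw2 v hv, 𝒮.inn_add_left']
  have hadjsmul : ∀ x ∈ 𝒮.adjDom T D, ∀ q : ℍ, 𝒮.smul x q ∈ 𝒮.adjDom T D := by
    rintro x ⟨w, hw⟩ q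
    refine ⟨𝒮.smul w q, fun v hv => ?_⟩
    rw [𝒮.inn_smul_left', hw v hv, 𝒮.inn_smul_left']
  have hadj0 : (0 : H) ∈ 𝒮.adjDom T D :=
    ⟨0, fun v hv => by rw [𝒮.inn_zero_left, 𝒮.inn_zero_left]⟩
  -- the graph of T over D0 as a real submodule M of K
  let M : Submodule ℝ (WithLp 2 (Hr 𝒮 × Hr 𝒮)) :=
    { carrier := {x | ((WithLp.ofLp x : Hr 𝒮 × Hr 𝒮) : H × H) ∈ graphOf T D0}
      add_mem' := by
        rintro x y ⟨⟨hx1, hx1'⟩, hx2⟩ ⟨⟨hy1, hy1'⟩, hy2⟩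
        refine ⟨⟨hDadd _ hx1 _ hy1, ?_⟩, ?_⟩
        · show T (x.ofLp.1 + y.ofLp.1) ∈ 𝒮.adjDom T D
          erw [hlin.1 _ hx1 _ hy1]; exact hadjadd _ hx1' _ hy1'
        · show x.ofLp.2 + y.ofLp.2 = T (x.ofLp.1 + y.ofLp.1)
          erw [hlin.1 _ hx1 _ hy1, hx2, hy2]; rfl
      zero_mem' := ⟨⟨h0D, hT0 ▸ hadj0⟩, hT0.symm⟩
      smul_mem' := by
        rintro r x ⟨⟨hx1, hx1'⟩, hx2⟩
        refine ⟨⟨hDsmul _ hx1 _, ?_⟩, ?_⟩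
        · show T (𝒮.smul x.ofLp.1 _) ∈ 𝒮.adjDom T D
          rw [hlin.2 _ hx1]; exact hadjsmul _ hx1' _
        · show 𝒮.smul x.ofLp.2 _ = T (𝒮.smul x.ofLp.1 _)
          rw [hlin.2 _ hx1, hx2] }
  have hMG : M ≤ G := by rintro x ⟨⟨hx1, _⟩, hx2⟩; exact ⟨hx1, hx2⟩
  set Mc := M.topologicalClosure with hMcdef
  haveI : CompleteSpace Mc := M.isClosed_topologicalClosure.completeSpace_coe
  have hMcG : Mc ≤ G := M.topologicalClosure_minimal hMG hGclosed
  -- upgrading real orthogonality to quaternionic identities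
  have upgrade : ∀ a b : H, (∀ v' ∈ D, (𝒮.inn a v').re + (𝒮.inn b (T v')).re = 0) →
      ∀ v' ∈ D, 𝒮.inn a v' = -𝒮.inn b (T v') := by
    intro a b hab v' hv'
    have key : ∀ q : ℍ, ((𝒮.inn a v' + 𝒮.inn b (T v')) * q).re = 0 := by
      intro q
      have h1 := hab (𝒮.smul v' q) (hDsmul _ hv' q)
      rw [hlin.2 _ hv', 𝒮.inn_smul_right, 𝒮.inn_smul_right] at h1
      rw [add_mul, Quaternion.re_add]
      exact h1
    have h2 := quat_zero_of_re_mul key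
    exact eq_neg_of_add_eq_zero_left h2
  -- Step 1: range of 1 + T*T is everything (in disguise)
  have step1 : ∀ y : H, ∃ v a : H, v ∈ D0 ∧
      (∀ v' ∈ D, 𝒮.inn a v' = 𝒮.inn (T v) (T v')) ∧ v + a = y := by
    intro y
    obtain ⟨g, hg, z, hz, hx⟩ :=
      G.exists_add_mem_mem_orthogonal (WithLp.toLp 2 ((y, 0) : Hr 𝒮 × Hr 𝒮))
    have hg' : g.ofLp.1 ∈ D ∧ g.ofLp.2 = T g.ofLp.1 := hg
    have e : y = g.ofLp.1 + z.ofLp.1 := congrArg (fun w => w.ofLp.1) hx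
    have e2 : (0 : H) = g.ofLp.2 + z.ofLp.2 := congrArg (fun w => w.ofLp.2) hx
    have hz2 : z.ofLp.2 = -T g.ofLp.1 := by
      rw [← hg'.2]
      exact eq_neg_of_add_eq_zero_right e2.symm
    have horth : ∀ v' ∈ D, (𝒮.inn z.ofLp.1 v').re + (𝒮.inn z.ofLp.2 (T v')).re = 0 := by
      intro v' hv'
      have hw : (WithLp.toLp 2 ((v', T v') : Hr 𝒮 × Hr 𝒮)) ∈ G :=
        ⟨hv', rfl⟩
      exact (Submodule.mem_orthogonal' G z).mp hz _ hw
    have ha : ∀ v' ∈ D, 𝒮.inn z.ofLp.1 v' = 𝒮.inn (T g.ofLp.1) (T v') := by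
      intro v' hv'
      rw [upgrade z.ofLp.1 z.ofLp.2 horth v' hv', hz2, 𝒮.inn_neg_left, neg_neg]
    refine ⟨g.ofLp.1, z.ofLp.1, ⟨hg'.1, ⟨z.ofLp.1, ha⟩⟩, ha, e.symm⟩
  -- Step 2: conclusion
  ext p
  constructor
  · intro hp
    exact closure_minimal
      (show graphOf T D0 ⊆ graphOf T D from fun q hq => ⟨hq.1.1, hq.2⟩) hclosed hp
  · rintro ⟨hpD, hpT⟩
    obtain ⟨m, hm, z, hz, hx⟩ :=
      Mc.exists_add_mem_mem_orthogonal (@WithLp.toLp 2 (Hr 𝒮 × Hr 𝒮) p)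
    have hmG : m ∈ G := hMcG hm
    have hpG : (@WithLp.toLp 2 (Hr 𝒮 × Hr 𝒮) p) ∈ G := ⟨hpD, hpT⟩
    have hzeq : z = (@WithLp.toLp 2 (Hr 𝒮 × Hr 𝒮) p) - m := by rw [hx]; abel
    have hzG : z ∈ G := hzeq ▸ G.sub_mem hpG hmG
    have hz1D : z.ofLp.1 ∈ D := hzG.1
    have hz2T : z.ofLp.2 = T z.ofLp.1 := hzG.2
    have horthM : ∀ v ∈ D0, (𝒮.inn v z.ofLp.1).re + (𝒮.inn (T v) (T z.ofLp.1)).re = 0 := by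
      intro v hv
      have hw : (WithLp.toLp 2 ((v, T v) : Hr 𝒮 × Hr 𝒮)) ∈ M := ⟨hv, rfl⟩
      have h1 : (𝒮.inn v z.ofLp.1).re + (𝒮.inn (T v) z.ofLp.2).re = 0 :=
        (Submodule.mem_orthogonal Mc z).mp hz _ (M.le_topologicalClosure hw)
      rwa [hz2T] at h1
    obtain ⟨v, a, hvD0, ha, hva⟩ := step1 z.ofLp.1
    have hnorm : ‖z.ofLp.1‖ ^ 2 = 0 := by
      erw [𝒮.norm_sq' z.ofLp.1,
        show 𝒮.inn z.ofLp.1 z.ofLp.1 = 𝒮.inn z.ofLp.1 v + 𝒮.inn z.ofLp.1 a from by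
          erw [← 𝒮.inn_add_right, hva],
        Quaternion.re_add, 𝒮.re_inn_symm z.ofLp.1 v, 𝒮.re_inn_symm z.ofLp.1 a, ha z.ofLp.1 hz1D]
      exact horthM v hvD0
    have hz10 : z.ofLp.1 = 0 :=
      norm_eq_zero.mp ((pow_eq_zero_iff two_ne_zero).mp hnorm)
    have hz20 : z.ofLp.2 = 0 := by erw [hz2T, hz10, hT0]; rfl
    have hz0 : z = 0 := WithLp.ofLp_injective 2 (Prod.ext hz10 hz20)
    have hpm : (@WithLp.toLp 2 (Hr 𝒮 × Hr 𝒮) p) ∈ Mc := by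
      rw [hx, hz0, add_zero]; exact hm
    have hfin : (@WithLp.toLp 2 (Hr 𝒮 × Hr 𝒮) p) ∈ closure (M : Set (WithLp 2 (Hr 𝒮 × Hr 𝒮))) := by
      rw [← Submodule.topologicalClosure_coe]
      exact hpm
    exact map_mem_closure (WithLp.prod_continuous_ofLp 2 (Hr 𝒮) (Hr 𝒮)) hfin (fun x hx => hx)
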